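/- Let ε ∈ (0, 1/120) and δ ∈ (2ε, 1/60). Let G be a bipartite graph and let H be a (β, (1−ε)β)-EDCS of G, where β > (1−ε)β ≥ 1. Let Vmid := {v : deg_H(v) ∈ [0.4β, 0.6β]}, Vlow := {v : deg_H(v) ∈ [0, 0.2β]}, and H' := H[Vlow, Vmid]. If μ(H) ≤ (2/3 + δ)·μ(G), then for every matching M of H', μ(G[Vmid ∖ V(M)]) ≥ (1/3 − 800·δ)·μ(G). -/

import Mathlib

open scoped Classical

noncomputable section

variable {V : Type*}

/-- `M` is a matching of `G`: a set of edges of `G` that are pairwise vertex-disjoint. -/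
def IsMatchingSet (G : SimpleGraph V) (M : Set (Sym2 V)) : Prop :=
  M ⊆ G.edgeSet ∧ M.Pairwise fun e f => ∀ v : V, v ∈ e → v ∉ f

/-- The set of vertices matched by the edge set `M`. -/
def mVerts (M : Set (Sym2 V)) : Set V := {v | ∃ e ∈ M, v ∈ e}

/-- The matching number of `G`. -/
def nu (G : SimpleGraph V) : ℕ :=
  sSup {n | ∃ M : Set (Sym2 V), IsMatchingSet G M ∧ M.ncard = n}

/-- The bipartite subgraph of `G` consisting of the edges of `G` with one endpoint in `X`
and the other endpoint in `Y`. -/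
def between (G : SimpleGraph V) (X Y : Set V) : SimpleGraph V where
  Adj u v := G.Adj u v ∧ ((u ∈ X ∧ v ∈ Y) ∨ (u ∈ Y ∧ v ∈ X))
  symm := ⟨fun u v h => ⟨h.1.symm, h.2.elim (fun hh => Or.inr ⟨hh.2, hh.1⟩) (fun hh => Or.inl ⟨hh.2, hh.1⟩)⟩⟩
  loopless := ⟨fun v h => G.loopless.irrefl v h.1⟩

/-- The induced subgraph of `G` on the vertex set `U` (on the same vertex type). -/
def inducedOn (G : SimpleGraph V) (U : Set V) : SimpleGraph V where
  Adj u v := G.Adj u v ∧ u ∈ U ∧ v ∈ U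
  symm := ⟨fun u v h => ⟨h.1.symm, h.2.2, h.2.1⟩⟩
  loopless := ⟨fun v h => G.loopless.irrefl v h.1⟩

/-- The degree of `v` in `H`. -/
def deg (H : SimpleGraph V) (v : V) : ℕ := (H.neighborSet v).ncard

/-- `H` is a `(β, βm)`-EDCS of `G`. -/
def IsEDCS (G H : SimpleGraph V) (β βm : ℝ) : Prop :=
  H ≤ G ∧ (∀ u v, H.Adj u v → (deg H u + deg H v : ℝ) ≤ β) ∧
    (∀ u v, G.Adj u v → ¬ H.Adj u v → βm ≤ (deg H u + deg H v : ℝ))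

/-- The neighborhood of a set `A` in `H`. -/
def nbhd (H : SimpleGraph V) (A : Set V) : Set V := {v | ∃ a ∈ A, H.Adj a v}

/-- The edges of `M` with one endpoint in `X` and the other endpoint in `Y`. -/
def crossE (M : Set (Sym2 V)) (X Y : Set V) : Set (Sym2 V) :=
  {e | e ∈ M ∧ ∃ u v, e = s(u, v) ∧ u ∈ X ∧ v ∈ Y}

/-- `M` is a maximal matching of `G`. -/
def IsMaximalMatching (G : SimpleGraph V) (M : Set (Sym2 V)) : Prop :=
  IsMatchingSet G M ∧ ∀ M' : Set (Sym2 V), IsMatchingSet G M' → M ⊆ M' → M' = M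

lemma card_le_nu [Fintype V] {G : SimpleGraph V} {M : Set (Sym2 V)}
    (h : IsMatchingSet G M) : M.ncard ≤ nu G := by
  apply le_csSup
  · refine ⟨Fintype.card (Sym2 V), ?_⟩
    rintro n ⟨M', _, rfl⟩
    calc M'.ncard ≤ (Set.univ : Set (Sym2 V)).ncard :=
          Set.ncard_le_ncard (Set.subset_univ _) Set.finite_univ
      _ = Fintype.card (Sym2 V) := by rw [Set.ncard_univ, Nat.card_eq_fintype_card]
  · exact ⟨M, h, rfl⟩

lemma exists_nu_matching [Fintype V] (G : SimpleGraph V) :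
    ∃ M : Set (Sym2 V), IsMatchingSet G M ∧ M.ncard = nu G := by
  have h0 : (0:ℕ) ∈ {n | ∃ M : Set (Sym2 V), IsMatchingSet G M ∧ M.ncard = n} :=
    ⟨∅, ⟨Set.empty_subset _, Set.pairwise_empty _⟩, Set.ncard_empty _⟩
  have hbdd : BddAbove {n | ∃ M : Set (Sym2 V), IsMatchingSet G M ∧ M.ncard = n} := by
    refine ⟨Fintype.card (Sym2 V), ?_⟩
    rintro n ⟨M', _, rfl⟩
    calc M'.ncard ≤ (Set.univ : Set (Sym2 V)).ncard :=
          Set.ncard_le_ncard (Set.subset_univ _) Set.finite_univ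
      _ = Fintype.card (Sym2 V) := by rw [Set.ncard_univ, Nat.card_eq_fintype_card]
  exact Nat.sSup_mem ⟨0, h0⟩ hbdd

lemma deg_eq_card [Fintype V] (H : SimpleGraph V) (v : V) :
    deg H v = (H.neighborFinset v).card := by
  rw [deg, SimpleGraph.neighborFinset, Set.ncard_eq_toFinset_card']

/-- König's theorem, cover direction: a bipartite graph has a vertex cover
of size at most its matching number. -/
lemma koenig [Fintype V] (H : SimpleGraph V) (hcol : H.Colorable 2) :
    ∃ C : Finset V, (∀ u v, H.Adj u v → u ∈ C ∨ v ∈ C) ∧ C.card ≤ nu H := by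
  obtain ⟨col⟩ := hcol
  set A : Finset V := Finset.univ.filter (fun v => col v = 0) with hA
  set nbr : V → Finset V := fun v => H.neighborFinset v with hnbr
  set Dfun : Finset V → ℕ := fun s => s.card - (s.biUnion nbr).card with hDfun
  set D : ℕ := A.powerset.sup Dfun with hD
  -- the defect-Hall matching: nu H ≥ A.card - D
  have hnuH : A.card - D ≤ nu H := by
    set t : {a // a ∈ A} → Finset (V ⊕ Fin D) := fun a =>
      ((nbr a.1).map ⟨Sum.inl, Sum.inl_injective⟩) ∪
        ((Finset.univ : Finset (Fin D)).map ⟨Sum.inr, Sum.inr_injective⟩) with ht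
    have hHall : ∀ s : Finset {a // a ∈ A}, s.card ≤ (s.biUnion t).card := by
      intro s
      rcases s.eq_empty_or_nonempty with rfl | hs
      · simp
      have hsub1 : ((s.image Subtype.val).biUnion nbr).map ⟨Sum.inl, Sum.inl_injective⟩ ⊆
          s.biUnion t := by
        intro x hx
        simp only [Finset.mem_map, Finset.mem_biUnion, Finset.mem_image] at hx
        obtain ⟨b, ⟨v, ⟨a, ha, rfl⟩, hb⟩, rfl⟩ := hx
        exact Finset.mem_biUnion.2 ⟨a, ha, Finset.mem_union_left _
          (Finset.mem_map.2 ⟨b, hb, rfl⟩)⟩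
      have hsub2 : ((Finset.univ : Finset (Fin D)).map ⟨Sum.inr, Sum.inr_injective⟩) ⊆
          s.biUnion t := by
        intro x hx
        obtain ⟨a, ha⟩ := hs
        exact Finset.mem_biUnion.2 ⟨a, ha, Finset.mem_union_right _ hx⟩
      have hdisj : Disjoint (((s.image Subtype.val).biUnion nbr).map
          (⟨Sum.inl, Sum.inl_injective⟩ : V ↪ V ⊕ Fin D))
          ((Finset.univ : Finset (Fin D)).map ⟨Sum.inr, Sum.inr_injective⟩) := by
        simp only [Finset.disjoint_left, Finset.mem_map]
        rintro x ⟨b, _, rfl⟩ ⟨j, _, hj⟩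
        exact Sum.inl_ne_inr hj.symm
      have hcard : ((s.image Subtype.val).biUnion nbr).card + D ≤ (s.biUnion t).card := by
        have := Finset.card_le_card (Finset.union_subset hsub1 hsub2)
        rwa [Finset.card_union_of_disjoint hdisj, Finset.card_map, Finset.card_map,
          Finset.card_univ, Fintype.card_fin] at this
      have himg : (s.image Subtype.val).card = s.card :=
        Finset.card_image_of_injective _ Subtype.val_injective
      have hDge : Dfun (s.image Subtype.val) ≤ D := by
        apply Finset.le_sup
        simp only [Finset.mem_powerset]
        intro v hv
        simp only [Finset.mem_image] at hv
        obtain ⟨a, _, rfl⟩ := hv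
        exact a.2
      simp only [hDfun] at hDge
      omega
    obtain ⟨f, hfinj, hf⟩ := (Finset.all_card_le_biUnion_card_iff_exists_injective t).1 hHall
    set partner : {a // a ∈ A} → V := fun a => (f a).elim id (fun _ => a.1) with hpartner
    set matched : Finset {a // a ∈ A} :=
      Finset.univ.filter (fun a => ∃ b : V, f a = Sum.inl b) with hmatched
    have hadj : ∀ a ∈ matched, H.Adj a.1 (partner a) ∧ f a = Sum.inl (partner a) := by
      intro a ha
      simp only [hmatched, Finset.mem_filter] at ha
      obtain ⟨-, b, hb⟩ := ha
      have hfa := hf a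
      rw [hb] at hfa
      simp only [ht, Finset.mem_union, Finset.mem_map] at hfa
      have hpa : partner a = b := by simp [hpartner, hb]
      rcases hfa with ⟨b', hb', hbb⟩ | ⟨j, _, hj⟩
      · cases hbb
        refine ⟨?_, by rw [hpa, hb]⟩
        rw [hpa]
        exact (SimpleGraph.mem_neighborFinset _ _ _).1 hb'
      · exact absurd hj (by simp)
    have hcolA : ∀ a : {x // x ∈ A}, col a.1 = 0 := by
      intro a
      have := a.2
      simp only [hA, Finset.mem_filter] at this
      exact this.2
    have hcolP : ∀ a ∈ matched, col (partner a) ≠ 0 := by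
      intro a ha
      have h1 := (hadj a ha).1
      have := col.valid h1
      rw [hcolA a] at this
      exact fun h => this h.symm
    -- count unmatched
    have hunm : (Finset.univ \ matched : Finset {a // a ∈ A}).card ≤ D := by
      have key : (Finset.univ \ matched : Finset {a // a ∈ A}).card ≤
          ((Finset.univ : Finset (Fin D)).image some).card := by
        apply Finset.card_le_card_of_injOn (fun a => (f a).getRight?)
        · intro a ha
          simp only [Finset.mem_coe, hmatched, Finset.mem_sdiff, Finset.mem_filter, Finset.mem_univ,
            true_and] at ha
          obtain ⟨j, hj⟩ : ∃ j, f a = Sum.inr j := by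
            rcases hfa : f a with b | j
            · exact absurd ⟨b, hfa⟩ ha
            · exact ⟨j, rfl⟩
          simp only [Finset.mem_coe, hj]
          simp
        · intro a ha a' ha' hgr
          simp only [hmatched, Finset.mem_sdiff, Finset.mem_filter, Finset.mem_univ,
            true_and, Finset.coe_sdiff, Set.mem_diff, Finset.mem_coe, Finset.coe_filter,
            Set.mem_setOf_eq, Finset.coe_univ, Set.mem_univ] at ha ha'
          obtain ⟨j, hj⟩ : ∃ j, f a = Sum.inr j := by
            rcases hfa : f a with b | j
            · exact absurd (⟨b, hfa⟩ : ∃ b, f a = Sum.inl b) (by tauto)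
            · exact ⟨j, rfl⟩
          obtain ⟨j', hj'⟩ : ∃ j', f a' = Sum.inr j' := by
            rcases hfa : f a' with b | j'
            · exact absurd (⟨b, hfa⟩ : ∃ b, f a' = Sum.inl b) (by tauto)
            · exact ⟨j', rfl⟩
          have hgr' : (f a).getRight? = (f a').getRight? := hgr
          rw [hj, hj'] at hgr'
          simp only [Sum.getRight?_inr, Option.some_inj] at hgr'
          exact hfinj (by rw [hj, hj', hgr'])
      calc _ ≤ _ := key
        _ ≤ (Finset.univ : Finset (Fin D)).card := Finset.card_image_le
        _ = D := by simp
    have hmcard : A.card ≤ matched.card + D := by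
      have h1 : (Finset.univ \ matched : Finset {a // a ∈ A}).card
          = Fintype.card {a // a ∈ A} - matched.card := by
        rw [Finset.card_sdiff_of_subset (Finset.subset_univ _), Finset.card_univ]
      have h1b : matched.card ≤ Fintype.card {a // a ∈ A} := by
        rw [← Finset.card_univ]
        exact Finset.card_le_card (Finset.subset_univ _)
      have h2 : Fintype.card {a // a ∈ A} = A.card := Fintype.card_coe A
      omega
    -- the matching
    set M0 : Finset (Sym2 V) := matched.image (fun a => s(a.1, partner a)) with hM0
    have hM0inj : Set.InjOn (fun a : {x // x ∈ A} => s(a.1, partner a)) matched := by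
      intro a ha a' ha' heq
      simp only [Sym2.eq_iff] at heq
      rcases heq with ⟨h1, h2⟩ | ⟨h1, h2⟩
      · exact Subtype.ext h1
      · exact absurd (h1 ▸ hcolA a) (hcolP a' ha')
    have hM0card : M0.card = matched.card := Finset.card_image_of_injOn hM0inj
    have hM0match : IsMatchingSet H (M0 : Set (Sym2 V)) := by
      constructor
      · intro e he
        simp only [hM0, Finset.coe_image, Set.mem_image, Finset.mem_coe] at he
        obtain ⟨a, ha, rfl⟩ := he
        exact (hadj a ha).1
      · intro e he e' he' hne
        simp only [hM0, Finset.coe_image, Set.mem_image, Finset.mem_coe] at he he'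
        obtain ⟨a, ha, rfl⟩ := he
        obtain ⟨a', ha', rfl⟩ := he'
        intro v hv hv'
        have hane : a ≠ a' := fun h => hne (by rw [h])
        rw [Sym2.mem_iff] at hv hv'
        have hpne : partner a ≠ partner a' := by
          intro h
          apply hane
          apply hfinj
          rw [(hadj a ha).2, (hadj a' ha').2, h]
        have havne : a.1 ≠ a'.1 := fun h => hane (Subtype.ext h)
        rcases hv with rfl | rfl <;> rcases hv' with h | h
        · exact havne h
        · exact absurd (h ▸ hcolA a) (hcolP a' ha')
        · exact absurd (h.symm ▸ hcolA a') (hcolP a ha)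
        · exact hpne h
    have : M0.card ≤ nu H := by
      have := card_le_nu hM0match
      rwa [Set.ncard_coe_finset] at this
    omega
  -- now build the cover
  rcases Nat.eq_zero_or_pos D with hD0 | hDpos
  · refine ⟨A, ?_, by omega⟩
    intro u v huv
    have hne := col.valid huv
    have h2 : ∀ x : Fin 2, x = 0 ∨ x = 1 := by decide
    rcases h2 (col u) with h | h
    · left; simp [hA, h]
    · rcases h2 (col v) with h' | h'
      · right; simp [hA, h']
      · exact absurd (h.trans h'.symm) hne
  · obtain ⟨S0, hS0mem, hS0⟩ := Finset.exists_mem_eq_sup A.powerset ⟨∅, by simp⟩ Dfun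
    rw [← hD] at hS0
    have hS0A : S0 ⊆ A := Finset.mem_powerset.1 hS0mem
    have hS0card : (S0.biUnion nbr).card + D = S0.card := by
      have : Dfun S0 = S0.card - (S0.biUnion nbr).card := rfl
      omega
    refine ⟨(A \ S0) ∪ S0.biUnion nbr, ?_, ?_⟩
    · intro u v huv
      have hne := col.valid huv
      have h2 : ∀ x : Fin 2, x = 0 ∨ x = 1 := by decide
      have key : ∀ u v, H.Adj u v → col u = 0 → u ∈ (A \ S0) ∪ S0.biUnion nbr ∨
          v ∈ (A \ S0) ∪ S0.biUnion nbr := by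
        intro u v huv hu
        have huA : u ∈ A := by simp [hA, hu]
        by_cases hus : u ∈ S0
        · right
          apply Finset.mem_union_right
          exact Finset.mem_biUnion.2 ⟨u, hus, (SimpleGraph.mem_neighborFinset _ _ _).2 huv⟩
        · left
          exact Finset.mem_union_left _ (Finset.mem_sdiff.2 ⟨huA, hus⟩)
      rcases h2 (col u) with h | h
      · exact key u v huv h
      · rcases h2 (col v) with h' | h'
        · exact (key v u huv.symm h').symm
        · exact absurd (h.trans h'.symm) hne
    · have hcard : ((A \ S0) ∪ S0.biUnion nbr).card ≤ (A \ S0).card + (S0.biUnion nbr).card :=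
        Finset.card_union_le _ _
      have h1 : (A \ S0).card = A.card - S0.card := Finset.card_sdiff_of_subset hS0A
      have h2 : S0.card ≤ A.card := Finset.card_le_card hS0A
      omega

lemma bal_sq {β ε a b : ℝ} (hβ : 0 < β) (hε0 : 0 < ε) (hε1 : ε < 1)
    (hsum : (1-ε)*β ≤ a + b) : (1/2 - ε)*β^2 ≤ a^2 + b^2 := by
  have h1 : 0 ≤ a + b + (1-ε)*β := by nlinarith
  have h2 : 0 ≤ (a + b - (1-ε)*β) * (a + b + (1-ε)*β) :=
    mul_nonneg (by linarith) h1
  nlinarith [sq_nonneg (a - b), sq_nonneg (ε*β)]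

lemma unbal_sq {β ε a b : ℝ} (hβ : 0 < β) (hε0 : 0 < ε) (hε : ε < 1/120)
    (ha : 0 ≤ a) (hb : 0 ≤ b) (hsum : (1-ε)*β ≤ a + b)
    (hout : a < 0.4*β ∨ 0.6*β < a) : 51/100*β^2 ≤ a^2 + b^2 := by
  have hpq : 0 ≤ a + b - 119/120*β := by nlinarith
  rcases hout with h | h
  · have hP : 0 ≤ 2/5*β - a := by nlinarith
    nlinarith [sq_nonneg (2/5*β - a), sq_nonneg (b - 71/120*β),
      mul_nonneg hβ.le hpq, mul_nonneg hβ.le hP, sq_nonneg β]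
  · have hP : 0 ≤ a - 3/5*β := by nlinarith
    nlinarith [sq_nonneg (a - 3/5*β), sq_nonneg (b - 47/120*β),
      mul_nonneg hβ.le hpq, mul_nonneg hβ.le hP, sq_nonneg β]

set_option maxHeartbeats 2000000 in
/-- Property (P2) of the characterization of tight EDCS instances (bipartite graphs):
if `μ(H) ≤ (2/3 + δ)·μ(G)`, then for every matching `M` of `H'`,
`μ(G[Vmid ∖ V(M)]) ≥ (1/3 − 800δ)·μ(G)`. -/
theorem EDCS_tight_P2 [Fintype V] (G H : SimpleGraph V) (ε δ β : ℝ)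
    (hε0 : 0 < ε) (hε : ε < 1 / 120) (hδl : 2 * ε < δ) (hδu : δ < 1 / 60)
    (hbip : G.Colorable 2)
    (hβ1 : 1 ≤ (1 - ε) * β) (hβ2 : (1 - ε) * β < β)
    (hEDCS : IsEDCS G H β ((1 - ε) * β))
    (Vmid Vlow : Set V)
    (hVmid : Vmid = {v | 0.4 * β ≤ (deg H v : ℝ) ∧ (deg H v : ℝ) ≤ 0.6 * β})
    (hVlow : Vlow = {v | 0 ≤ (deg H v : ℝ) ∧ (deg H v : ℝ) ≤ 0.2 * β})
    (H' : SimpleGraph V) (hH' : H' = between H Vlow Vmid)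
    (hmu : (nu H : ℝ) ≤ (2 / 3 + δ) * nu G) :
    ∀ M : Set (Sym2 V), IsMatchingSet H' M →
      (1 / 3 - 800 * δ) * nu G ≤ (nu (inducedOn G (Vmid \ mVerts M)) : ℝ) := by
  intro M hM
  have hM1 : M ⊆ H'.edgeSet := hM.1
  have hM2 : M.Pairwise fun e f => ∀ v : V, v ∈ e → v ∉ f := hM.2
  have hle : H ≤ G := hEDCS.1
  have hub : ∀ u v, H.Adj u v → (deg H u + deg H v : ℝ) ≤ β := hEDCS.2.1
  have hlb : ∀ u v, G.Adj u v → ¬ H.Adj u v → (1-ε)*β ≤ (deg H u + deg H v : ℝ) :=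
    hEDCS.2.2
  have hε1 : ε < 1 := lt_trans hε (by norm_num)
  have hβpos : 0 < β := by linarith
  have hδ0 : 0 < δ := lt_trans (by linarith) hδl
  -- the empty case
  rcases isEmpty_or_nonempty V with hV | hV
  · obtain ⟨Ms, hMs, hMscard⟩ := exists_nu_matching G
    have hMse : Ms = ∅ := Set.eq_empty_iff_forall_notMem.2 (fun e he => by
      induction e with
      | _ u v => exact (IsEmpty.false u).elim)
    have h0 : nu G = 0 := by rw [← hMscard, hMse, Set.ncard_empty]
    rw [h0]
    have h1 : (0:ℝ) ≤ (nu (inducedOn G (Vmid \ mVerts M)) : ℝ) := Nat.cast_nonneg _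
    push_cast
    linarith
  -- basic degree facts
  set d : V → ℝ := fun v => ((deg H v : ℕ) : ℝ) with hdd
  have hd0 : ∀ v, 0 ≤ d v := fun v => Nat.cast_nonneg _
  have hdcard : ∀ v, d v = ((H.neighborFinset v).card : ℝ) := by
    intro v; rw [hdd]; dsimp only; exact_mod_cast deg_eq_card H v
  have hub' : ∀ {u v}, H.Adj u v → d u + d v ≤ β := fun h => hub _ _ h
  have hlb' : ∀ {u v}, G.Adj u v → ¬ H.Adj u v → (1-ε)*β ≤ d u + d v :=
    fun h h' => hlb _ _ h h'
  -- max matching of G, cover of H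
  obtain ⟨Ms, hMs, hMscard⟩ := exists_nu_matching G
  have hMs1 : Ms ⊆ G.edgeSet := hMs.1
  have hMs2 : Ms.Pairwise fun e f => ∀ v : V, v ∈ e → v ∉ f := hMs.2
  set μ : ℝ := ((nu G : ℕ) : ℝ) with hμdef
  have hμ0 : 0 ≤ μ := Nat.cast_nonneg _
  have hcolH : H.Colorable 2 := SimpleGraph.Colorable.mono_left hle hbip
  obtain ⟨C, hCcov, hCcard⟩ := koenig H hcolH
  classical
  set MsF : Finset (Sym2 V) := Ms.toFinset with hMsF
  have hMsmem : ∀ e, e ∈ MsF ↔ e ∈ Ms := by intro e; rw [hMsF, Set.mem_toFinset]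
  have hMsFcard : (MsF.card : ℝ) = μ := by
    rw [hMsF, ← Set.ncard_eq_toFinset_card', hMscard]
  set FF : Finset (Sym2 V) := MsF.filter (fun e => ∀ w ∈ e, w ∉ C) with hFF
  set ends : Sym2 V → Finset V := fun e => Finset.univ.filter (· ∈ e) with hends
  have hendsmem : ∀ w e, w ∈ ends e ↔ w ∈ e := by
    intro w e; rw [hends]; simp
  set FE : Finset V := FF.biUnion ends with hFE
  -- a robust ite-sum conversion
  have hconv : ∀ (s t : Finset V) (g : V → ℝ),
      ∑ w ∈ s, (if w ∈ t then g w else 0) = ∑ w ∈ s ∩ t, g w := by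
    intro s t g
    have h1 : ∑ w ∈ s ∩ t, (if w ∈ t then g w else 0) =
        ∑ w ∈ s, (if w ∈ t then g w else 0) :=
      Finset.sum_subset Finset.inter_subset_left (by
        intro x hx hx2
        have hxt : x ∉ t := fun hxt => hx2 (Finset.mem_inter.2 ⟨hx, hxt⟩)
        exact if_neg hxt)
    rw [← h1]
    exact Finset.sum_congr rfl (fun x hx => if_pos (Finset.mem_inter.1 hx).2)
  -- decomposition of matched edges
  have hedge : ∀ e ∈ MsF, ∃ u v : V, e = s(u,v) ∧ u ≠ v ∧ G.Adj u v := by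
    intro e he
    have heG : e ∈ G.edgeSet := hMs1 ((hMsmem e).1 he)
    revert heG
    induction e with
    | _ u v =>
      intro heG
      rw [SimpleGraph.mem_edgeSet] at heG
      exact ⟨u, v, rfl, heG.ne, heG⟩
  have hdisjE : ∀ e ∈ MsF, ∀ e' ∈ MsF, e ≠ e' → ∀ w, w ∈ e → w ∉ e' := by
    intro e he e' he' hne
    exact hMs2 ((hMsmem e).1 he) ((hMsmem e').1 he') hne
  have hendspair : ∀ (u v : V), u ≠ v → ends s(u,v) = {u, v} := by
    intro u v huv
    ext w
    rw [hendsmem, Sym2.mem_iff, Finset.mem_insert, Finset.mem_singleton]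
  -- uncovered edges of Ms are not in H
  have hFFprop : ∀ e ∈ FF, ∀ u v : V, e = s(u,v) →
      u ∉ C ∧ v ∉ C ∧ ¬ H.Adj u v := by
    intro e he u v hee
    rw [hFF, Finset.mem_filter] at he
    have hu : u ∉ C := he.2 u (by rw [hee]; exact Sym2.mem_mk_left u v)
    have hv : v ∉ C := he.2 v (by rw [hee]; exact Sym2.mem_mk_right u v)
    refine ⟨hu, hv, fun hadj => ?_⟩
    rcases hCcov u v hadj with h | h
    · exact hu h
    · exact hv h
  -- vertices of FE have all H-neighbours in C
  have hFEC : ∀ w ∈ FE, w ∉ C ∧ ∀ x, H.Adj w x → x ∈ C := by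
    intro w hw
    rw [hFE, Finset.mem_biUnion] at hw
    obtain ⟨e, he, hwe⟩ := hw
    rw [hendsmem] at hwe
    have hwC : w ∉ C := by
      rw [hFF, Finset.mem_filter] at he
      exact he.2 w hwe
    exact ⟨hwC, fun x hadj => (hCcov w x hadj).resolve_left hwC⟩
  -- the balanced predicate
  set balP : Sym2 V → Prop := fun e => ∀ w ∈ e, 0.4*β ≤ d w ∧ d w ≤ 0.6*β with hbalP
  set BalF : Finset (Sym2 V) := FF.filter balP with hBalF
  set UBF : Finset (Sym2 V) := FF.filter (fun e => ¬ balP e) with hUBF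
  set GoodF : Finset (Sym2 V) :=
    FF.filter (fun e => balP e ∧ ∀ w ∈ e, w ∉ mVerts M) with hGoodF
  set HitF : Finset (Sym2 V) :=
    FF.filter (fun e => ∃ w, w ∈ e ∧ w ∈ Vmid ∧ w ∈ mVerts M) with hHitF
  have hlowmid : ∀ v, v ∈ Vlow → v ∈ Vmid → False := by
    intro v h1 h2
    rw [hVlow] at h1; rw [hVmid] at h2
    have h3 := h1.2; have h4 := h2.1
    nlinarith
  have hbalmid : ∀ w, 0.4*β ≤ d w → d w ≤ 0.6*β → w ∈ Vmid := by
    intro w h1 h2; rw [hVmid]; exact ⟨h1, h2⟩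
  -- WM and X
  set WM : Finset V := FE.filter (fun w => w ∈ Vmid ∧ w ∈ mVerts M) with hWM
  have hex : ∀ w ∈ WM, ∃ x, s(w,x) ∈ M ∧ x ∈ C ∧ d x ≤ β/5 := by
    intro w hw
    rw [hWM, Finset.mem_filter] at hw
    obtain ⟨hwFE, hwmid, hwM⟩ := hw
    have hwM' : ∃ e ∈ M, w ∈ e := hwM
    obtain ⟨e, heM, hwe⟩ := hwM'
    obtain ⟨x, rfl⟩ := Sym2.mem_iff_exists.1 hwe
    have hadj' : H'.Adj w x := (H'.mem_edgeSet).1 (hM1 heM)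
    rw [hH'] at hadj'
    obtain ⟨hadj, hside⟩ : H.Adj w x ∧ ((w ∈ Vlow ∧ x ∈ Vmid) ∨ (w ∈ Vmid ∧ x ∈ Vlow)) := hadj'
    have hxlow : x ∈ Vlow := by
      rcases hside with ⟨hwl, _⟩ | ⟨_, hxl⟩
      · exact (hlowmid w hwl hwmid).elim
      · exact hxl
    have hxd : d x ≤ β/5 := by
      rw [hVlow] at hxlow
      have h5 := hxlow.2
      rw [hdd]; dsimp only; linarith
    exact ⟨x, heM, (hFEC w hwFE).2 x hadj, hxd⟩
  set pick : V → V := fun w =>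
    if h : ∃ x, s(w,x) ∈ M ∧ x ∈ C ∧ d x ≤ β/5 then h.choose else w with hpick
  have hpickspec : ∀ w ∈ WM, s(w, pick w) ∈ M ∧ pick w ∈ C ∧ d (pick w) ≤ β/5 := by
    intro w hw
    have h := hex w hw
    rw [hpick]
    simp only [dif_pos h]
    exact h.choose_spec
  set X : Finset V := WM.image pick with hX
  have hXprop : ∀ x ∈ X, x ∈ C ∧ d x ≤ β/5 := by
    intro x hx
    rw [hX, Finset.mem_image] at hx
    obtain ⟨w, hw, rfl⟩ := hx
    exact (hpickspec w hw).2
  have hXsub : X ⊆ C := fun x hx => (hXprop x hx).1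
  have hXcard : X.card = WM.card := by
    rw [hX]
    apply Finset.card_image_of_injOn
    intro w hw w' hw' heq
    have h1 := (hpickspec w hw).1
    have h2 := (hpickspec w' hw').1
    rw [heq] at h1
    by_cases hee : s(w, pick w') = s(w', pick w')
    · rcases Sym2.eq_iff.1 hee with ⟨h, _⟩ | ⟨h, h'⟩
      · exact h
      · exact h.trans h'
    · exact absurd (Sym2.mem_mk_right w' (pick w'))
        (hM2 h1 h2 hee (pick w') (Sym2.mem_mk_right w (pick w')))
  -- ===== Lower bound on Q =====
  set Q : ℝ := ∑ w ∈ FE, (d w)^2 with hQ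
  have hdisjends : (↑FF : Set (Sym2 V)).PairwiseDisjoint ends := by
    intro e he e' he' hne
    simp only [Function.onFun]
    rw [Finset.disjoint_left]
    intro w hw hw'
    rw [hendsmem] at hw hw'
    have heF : e ∈ MsF := Finset.mem_of_mem_filter e (by rw [← hFF]; exact he)
    have heF' : e' ∈ MsF := Finset.mem_of_mem_filter e' (by rw [← hFF]; exact he')
    exact hdisjE e heF e' heF' hne w hw hw'
  have hQsplit : Q = ∑ e ∈ FF, ∑ w ∈ ends e, (d w)^2 := by
    rw [hQ, hFE, Finset.sum_biUnion hdisjends]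
  have hperedge : ∀ e ∈ FF,
      (if balP e then (1/2-ε)*β^2 else 51/100*β^2) ≤ ∑ w ∈ ends e, (d w)^2 := by
    intro e he
    have heF : e ∈ MsF := Finset.mem_of_mem_filter e (by rw [← hFF]; exact he)
    obtain ⟨x, y, rfl, hxy, hadjG⟩ := hedge e heF
    obtain ⟨hxC, hyC, hnH⟩ := hFFprop _ he x y rfl
    have hsum : (1-ε)*β ≤ d x + d y := hlb' hadjG hnH
    have hsumeq : ∑ w ∈ ends s(x,y), (d w)^2 = (d x)^2 + (d y)^2 := by
      rw [hendspair x y hxy, Finset.sum_pair hxy]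
    rw [hsumeq]
    by_cases hbal : balP s(x,y)
    · rw [if_pos hbal]
      exact bal_sq hβpos hε0 hε1 hsum
    · rw [if_neg hbal]
      simp only [hbalP] at hbal
      push_neg at hbal
      obtain ⟨w, hwe, hw⟩ := hbal
      have hout : d w < 0.4*β ∨ 0.6*β < d w := by
        by_cases h1 : 0.4*β ≤ d w
        · right; exact hw h1
        · left; exact lt_of_not_ge h1
      rcases Sym2.mem_iff.1 hwe with rfl | rfl
      · exact unbal_sq hβpos hε0 hε (hd0 w) (hd0 y) hsum hout
      · have hsum' : (1-ε)*β ≤ d w + d x := by linarith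
        have h5 := unbal_sq hβpos hε0 hε (hd0 w) (hd0 x) hsum' hout
        linarith
  have hQlow : (1/2-ε)*β^2 * (BalF.card : ℝ) + 51/100*β^2 * (UBF.card : ℝ) ≤ Q := by
    rw [hQsplit]
    have h1 : ∑ e ∈ FF, (if balP e then (1/2-ε)*β^2 else 51/100*β^2) ≤
        ∑ e ∈ FF, ∑ w ∈ ends e, (d w)^2 := Finset.sum_le_sum hperedge
    have h2 : ∑ e ∈ FF, (if balP e then (1/2-ε)*β^2 else 51/100*β^2) =
        (1/2-ε)*β^2 * (BalF.card : ℝ) + 51/100*β^2 * (UBF.card : ℝ) := by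
      rw [Finset.sum_ite, Finset.sum_const, Finset.sum_const, nsmul_eq_mul, nsmul_eq_mul,
        ← hBalF, ← hUBF]
      ring
    linarith
  -- ===== Upper bound on Q =====
  have hQup : Q ≤ (β^2/5) * (X.card : ℝ) + (β^2/4) * ((C.card : ℝ) - (X.card : ℝ)) := by
    have step1 : Q = ∑ w ∈ FE, ∑ x ∈ C, (if x ∈ H.neighborFinset w then d w else 0) := by
      rw [hQ]
      apply Finset.sum_congr rfl
      intro w hw
      have hsub : H.neighborFinset w ⊆ C := by
        intro x hx
        exact (hFEC w hw).2 x ((SimpleGraph.mem_neighborFinset _ _ _).1 hx)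
      rw [hconv C (H.neighborFinset w) (fun _ => d w),
        Finset.inter_eq_right.2 hsub, Finset.sum_const, nsmul_eq_mul, ← hdcard w]
      ring
    have step2 : Q = ∑ x ∈ C, ∑ w ∈ FE, (if x ∈ H.neighborFinset w then d w else 0) := by
      rw [step1]; exact Finset.sum_comm
    rw [step2]
    have step3 : ∀ x ∈ C, ∑ w ∈ FE, (if x ∈ H.neighborFinset w then d w else 0) ≤
        (if x ∈ X then β^2/5 else β^2/4) := by
      intro x hxC
      have hiff : ∀ w, (x ∈ H.neighborFinset w) ↔ (w ∈ H.neighborFinset x) := by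
        intro w
        simp only [SimpleGraph.mem_neighborFinset]
        constructor
        · exact fun h => h.symm
        · exact fun h => h.symm
      have hrw : ∑ w ∈ FE, (if x ∈ H.neighborFinset w then d w else 0)
          = ∑ w ∈ FE ∩ H.neighborFinset x, d w := by
        rw [Finset.sum_congr rfl (fun w _ => if_congr (hiff w) rfl rfl),
          hconv FE (H.neighborFinset x) d]
      rw [hrw]
      rcases Finset.eq_empty_or_nonempty (FE ∩ H.neighborFinset x) with hemp | ⟨w0, hw0⟩
      · rw [hemp, Finset.sum_empty]
        split <;> positivity
      · have hadj0 : H.Adj x w0 :=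
          (SimpleGraph.mem_neighborFinset _ _ _).1 (Finset.mem_inter.1 hw0).2
        have hdxβ : d x ≤ β := by
          have h5 := hub' hadj0
          have h6 := hd0 w0
          linarith
        have hbound : ∑ w ∈ FE ∩ H.neighborFinset x, d w ≤
            ((FE ∩ H.neighborFinset x).card : ℝ) * (β - d x) := by
          calc ∑ w ∈ FE ∩ H.neighborFinset x, d w
              ≤ ∑ _w ∈ FE ∩ H.neighborFinset x, (β - d x) := by
                apply Finset.sum_le_sum
                intro w hw
                have hadj : H.Adj x w :=
                  (SimpleGraph.mem_neighborFinset _ _ _).1 (Finset.mem_inter.1 hw).2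
                have h5 := hub' hadj
                linarith
            _ = ((FE ∩ H.neighborFinset x).card : ℝ) * (β - d x) := by
                rw [Finset.sum_const, nsmul_eq_mul]
        have hcardle : ((FE ∩ H.neighborFinset x).card : ℝ) ≤ d x := by
          rw [hdcard x]
          exact_mod_cast Finset.card_le_card Finset.inter_subset_right
        have hkey : ∑ w ∈ FE ∩ H.neighborFinset x, d w ≤ d x * (β - d x) := by
          calc ∑ w ∈ FE ∩ H.neighborFinset x, d w
              ≤ ((FE ∩ H.neighborFinset x).card : ℝ) * (β - d x) := hbound
            _ ≤ d x * (β - d x) :=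
                mul_le_mul_of_nonneg_right hcardle (by linarith)
        by_cases hxX : x ∈ X
        · rw [if_pos hxX]
          have hdx5 : d x ≤ β/5 := (hXprop x hxX).2
          calc ∑ w ∈ FE ∩ H.neighborFinset x, d w ≤ d x * (β - d x) := hkey
            _ ≤ β^2/5 := by nlinarith [hd0 x]
        · rw [if_neg hxX]
          calc ∑ w ∈ FE ∩ H.neighborFinset x, d w ≤ d x * (β - d x) := hkey
            _ ≤ β^2/4 := by nlinarith [sq_nonneg (β - 2*(d x))]
    calc ∑ x ∈ C, ∑ w ∈ FE, (if x ∈ H.neighborFinset w then d w else 0)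
        ≤ ∑ x ∈ C, (if x ∈ X then β^2/5 else β^2/4) := Finset.sum_le_sum step3
      _ = (β^2/5) * (X.card : ℝ) + (β^2/4) * ((C.card : ℝ) - (X.card : ℝ)) := by
          rw [Finset.sum_ite, Finset.sum_const, Finset.sum_const, nsmul_eq_mul, nsmul_eq_mul]
          have h1 : C.filter (fun x => x ∈ X) = X := by
            ext x
            rw [Finset.mem_filter]
            exact ⟨fun h => h.2, fun h => ⟨hXsub h, h⟩⟩
          have h3 : X.card ≤ C.card := Finset.card_le_card hXsub
          have h2 : (C.filter (fun x => ¬ x ∈ X)).card = C.card - X.card := by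
            have h4 := Finset.card_filter_add_card_filter_not
              (s := C) (p := fun x => x ∈ X)
            rw [h1] at h4
            omega
          rw [h1, h2, Nat.cast_sub h3]
          ring
  -- ===== counting inequalities =====
  have v0 : V := Classical.arbitrary V
  have hI1 : (MsF.card : ℝ) ≤ (FF.card : ℝ) + (C.card : ℝ) := by
    have hsplit := Finset.card_filter_add_card_filter_not
      (s := MsF) (p := fun e => ∀ w ∈ e, w ∉ C)
    have hinj : (MsF.filter (fun e => ¬ ∀ w ∈ e, w ∉ C)).card ≤ C.card := by
      set pickC : Sym2 V → V := fun e =>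
        if h : ∃ w, w ∈ e ∧ w ∈ C then h.choose else v0 with hpickC
      apply Finset.card_le_card_of_injOn pickC
      · intro e he
        rw [Finset.mem_coe, Finset.mem_filter] at he
        have hex' : ∃ w, w ∈ e ∧ w ∈ C := by
          obtain ⟨-, he2⟩ := he
          push_neg at he2
          obtain ⟨w, hw1, hw2⟩ := he2
          exact ⟨w, hw1, hw2⟩
        rw [hpickC]
        simp only [dif_pos hex']
        exact hex'.choose_spec.2
      · intro e he e' he' heq
        rw [Finset.mem_coe, Finset.mem_filter] at he he'
        have hex1 : ∃ w, w ∈ e ∧ w ∈ C := by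
          obtain ⟨-, he2⟩ := he; push_neg at he2
          obtain ⟨w, hw1, hw2⟩ := he2; exact ⟨w, hw1, hw2⟩
        have hex2 : ∃ w, w ∈ e' ∧ w ∈ C := by
          obtain ⟨-, he2⟩ := he'; push_neg at he2
          obtain ⟨w, hw1, hw2⟩ := he2; exact ⟨w, hw1, hw2⟩
        rw [hpickC] at heq
        simp only [dif_pos hex1, dif_pos hex2] at heq
        by_contra hne
        exact hdisjE e he.1 e' he'.1 hne _ hex1.choose_spec.1
          (heq ▸ hex2.choose_spec.1)
    rw [← hFF] at hsplit
    have hc : MsF.card ≤ FF.card + C.card := by omega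
    exact_mod_cast hc
  have hI3 : (C.card : ℝ) ≤ (2/3 + δ) * μ := by
    refine le_trans ?_ hmu
    exact_mod_cast hCcard
  have hI4 : (FF.card : ℝ) ≤ (GoodF.card : ℝ) + (UBF.card : ℝ) + (HitF.card : ℝ) := by
    have hsub4 : FF ⊆ (GoodF ∪ UBF) ∪ HitF := by
      intro e he
      by_cases hbal : balP e
      · by_cases hfree : ∀ w ∈ e, w ∉ mVerts M
        · refine Finset.mem_union_left _ (Finset.mem_union_left _ ?_)
          rw [hGoodF, Finset.mem_filter]
          exact ⟨he, hbal, hfree⟩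
        · push_neg at hfree
          obtain ⟨w, hwe, hwM⟩ := hfree
          have hwmid : w ∈ Vmid := by
            simp only [hbalP] at hbal
            exact hbalmid w (hbal w hwe).1 (hbal w hwe).2
          refine Finset.mem_union_right _ ?_
          rw [hHitF, Finset.mem_filter]
          exact ⟨he, w, hwe, hwmid, hwM⟩
      · refine Finset.mem_union_left _ (Finset.mem_union_right _ ?_)
        rw [hUBF, Finset.mem_filter]
        exact ⟨he, hbal⟩
    have h1 : FF.card ≤ GoodF.card + UBF.card + HitF.card := by
      calc FF.card ≤ ((GoodF ∪ UBF) ∪ HitF).card := Finset.card_le_card hsub4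
        _ ≤ (GoodF ∪ UBF).card + HitF.card := Finset.card_union_le _ _
        _ ≤ GoodF.card + UBF.card + HitF.card := by
            have h5 := Finset.card_union_le GoodF UBF
            omega
    exact_mod_cast h1
  have hI5 : (HitF.card : ℝ) ≤ (X.card : ℝ) := by
    rw [hXcard]
    have h1 : HitF.card ≤ WM.card := by
      set pickW : Sym2 V → V := fun e =>
        if h : ∃ w, w ∈ e ∧ w ∈ Vmid ∧ w ∈ mVerts M then h.choose else v0 with hpickW
      apply Finset.card_le_card_of_injOn pickW
      · intro e he
        simp only [Finset.mem_coe, hHitF, Finset.mem_filter] at he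
        obtain ⟨heFF, hex'⟩ := he
        rw [hpickW]
        simp only [dif_pos hex']
        obtain ⟨hw1, hw2, hw3⟩ := hex'.choose_spec
        rw [Finset.mem_coe, hWM, Finset.mem_filter]
        refine ⟨?_, hw2, hw3⟩
        rw [hFE, Finset.mem_biUnion]
        exact ⟨e, heFF, (hendsmem _ _).2 hw1⟩
      · intro e he e' he' heq
        simp only [Finset.mem_coe, hHitF, Finset.mem_filter] at he he'
        rw [hpickW] at heq
        simp only [dif_pos he.2, dif_pos he'.2] at heq
        by_contra hne
        have heF : e ∈ MsF := Finset.mem_of_mem_filter e (by rw [← hFF]; exact he.1)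
        have heF' : e' ∈ MsF := Finset.mem_of_mem_filter e' (by rw [← hFF]; exact he'.1)
        exact hdisjE e heF e' heF' hne _ he.2.choose_spec.1 (heq ▸ he'.2.choose_spec.1)
    exact_mod_cast h1
  have hI6 : (GoodF.card : ℝ) ≤ ((nu (inducedOn G (Vmid \ mVerts M)) : ℕ) : ℝ) := by
    have hmatch : IsMatchingSet (inducedOn G (Vmid \ mVerts M)) (↑GoodF : Set (Sym2 V)) := by
      constructor
      · intro e he
        rw [Finset.mem_coe, hGoodF, Finset.mem_filter] at he
        obtain ⟨heFF, hbal, hfree⟩ := he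
        have heF : e ∈ MsF := Finset.mem_of_mem_filter e (by rw [← hFF]; exact heFF)
        obtain ⟨x, y, rfl, hxy, hadjG⟩ := hedge e heF
        rw [SimpleGraph.mem_edgeSet]
        simp only [hbalP] at hbal
        have hxmem : x ∈ Vmid \ mVerts M := by
          have h1 := hbal x (Sym2.mem_mk_left x y)
          exact ⟨hbalmid x h1.1 h1.2, hfree x (Sym2.mem_mk_left x y)⟩
        have hymem : y ∈ Vmid \ mVerts M := by
          have h1 := hbal y (Sym2.mem_mk_right x y)
          exact ⟨hbalmid y h1.1 h1.2, hfree y (Sym2.mem_mk_right x y)⟩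
        exact (⟨hadjG, hxmem, hymem⟩ : G.Adj x y ∧ x ∈ Vmid \ mVerts M ∧ y ∈ Vmid \ mVerts M)
      · have hsubMs : (↑GoodF : Set (Sym2 V)) ⊆ Ms := by
          intro e he
          rw [Finset.mem_coe, hGoodF, Finset.mem_filter] at he
          exact (hMsmem e).1 (Finset.mem_of_mem_filter e (by rw [← hFF]; exact he.1))
        exact hMs2.mono hsubMs
    have h5 := card_le_nu hmatch
    rw [Set.ncard_coe_finset] at h5
    exact_mod_cast h5
  -- ===== put it together =====
  have hβ2' : (0:ℝ) < β^2 := by positivity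
  have hbalu : (BalF.card : ℝ) + (UBF.card : ℝ) = (FF.card : ℝ) := by
    have h5 := Finset.card_filter_add_card_filter_not (s := FF) (p := balP)
    rw [← hBalF, ← hUBF] at h5
    exact_mod_cast h5
  have hfμ : (FF.card : ℝ) ≤ μ := by
    rw [← hMsFcard]
    exact_mod_cast Finset.card_le_card (by rw [hFF]; exact Finset.filter_subset _ _)
  have hmaster : (1/2-ε) * (FF.card : ℝ) + (1/100) * (UBF.card : ℝ)
      + (1/20) * (X.card : ℝ) ≤ (C.card : ℝ)/4 := by
    have h := hQlow.trans hQup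
    have h4 : ((1/2-ε) * (BalF.card:ℝ) + 51/100 * (UBF.card:ℝ)) * β^2 ≤
        ((X.card:ℝ)/5 + ((C.card:ℝ) - (X.card:ℝ))/4) * β^2 := by linarith [h]
    have h5 : (1/2-ε) * (BalF.card:ℝ) + 51/100 * (UBF.card:ℝ) ≤
        (X.card:ℝ)/5 + ((C.card:ℝ) - (X.card:ℝ))/4 :=
      le_of_mul_le_mul_right h4 hβ2'
    have hεu : 0 ≤ ε * (UBF.card : ℝ) := mul_nonneg hε0.le (Nat.cast_nonneg _)
    have hbalu2 : ε * (BalF.card:ℝ) + ε * (UBF.card:ℝ) = ε * (FF.card:ℝ) := by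
      rw [← mul_add, hbalu]
    linarith [h5, hεu, hbalu, hbalu2]
  have hεf : ε * (FF.card : ℝ) ≤ (δ/2) * μ :=
    mul_le_mul (by linarith) hfμ (Nat.cast_nonneg _) (by linarith)
  have hδμ : (0:ℝ) ≤ δ * μ := mul_nonneg hδ0.le hμ0
  have hgood0 : (0:ℝ) ≤ (GoodF.card : ℝ) := Nat.cast_nonneg _
  have hu0 : (0:ℝ) ≤ (UBF.card : ℝ) := Nat.cast_nonneg _
  have hx0 : (0:ℝ) ≤ (X.card : ℝ) := Nat.cast_nonneg _
  have hμeq : (MsF.card : ℝ) = μ := hMsFcard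
  linarith [hI1, hI3, hI4, hI5, hI6, hmaster, hεf, hδμ, hfμ, hμeq, hgood0, hu0, hx0]
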